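/- Let Y be a Hilbert space and y₁, y₂, … independent identically distributed Y-valued random variables with E[y₁] = y, σ² := E[‖y₁ − y‖²] < ∞ and σ₄ := E[‖y₁ − y‖⁴] < ∞. Then the sample mean ȳ⁽ⁿ⁾ := (1/n)∑_{i=1}^n yᵢ satisfies E[‖ȳ⁽ⁿ⁾ − y‖⁴] ≤ σ₄/n³ + (3(n−1)/n³) σ⁴ for every n ≥ 1. -/

import Mathlib

open MeasureTheory ProbabilityTheory Filter Topology
open scoped BigOperators RealInnerProductSpace

private lemma smfb_pow_mul_pow_le (s t : ℝ) (hs : 0 ≤ s) (ht : 0 ≤ t) (a b : ℕ) :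
    s ^ a * t ^ b ≤ s ^ (a + b) + t ^ (a + b) := by
  rcases le_total s t with h | h
  · calc s ^ a * t ^ b ≤ t ^ a * t ^ b := by gcongr
      _ = t ^ (a + b) := (pow_add t a b).symm
      _ ≤ s ^ (a + b) + t ^ (a + b) := le_add_of_nonneg_left (by positivity)
  · calc s ^ a * t ^ b ≤ s ^ a * s ^ b := by gcongr
      _ = s ^ (a + b) := (pow_add s a b).symm
      _ ≤ s ^ (a + b) + t ^ (a + b) := le_add_of_nonneg_right (by positivity)

private lemma smfb_pow_le_one_add (a : ℝ) (ha : 0 ≤ a) {k : ℕ} (hk : k ≤ 4) :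
    a ^ k ≤ 1 + a ^ 4 := by
  rcases le_total a 1 with h | h
  · have h1 : a ^ k ≤ 1 := pow_le_one₀ ha h
    nlinarith [pow_nonneg ha 4]
  · have h1 : a ^ k ≤ a ^ 4 := pow_le_pow_right₀ h hk
    nlinarith [pow_nonneg ha k]

private lemma smfb_integral_inner
    {Y : Type*} [NormedAddCommGroup Y] [InnerProductSpace ℝ Y] [CompleteSpace Y]
    [MeasurableSpace Y] [BorelSpace Y] [SecondCountableTopology Y]
    {Ω : Type*} [MeasurableSpace Ω] {μ : Measure Ω} [IsProbabilityMeasure μ]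
    {F G : Ω → Y} (h : IndepFun F G μ) (hF : Integrable F μ) (hG : Integrable G μ) :
    ∫ ω, ⟪F ω, G ω⟫ ∂μ = ⟪∫ ω, F ω ∂μ, ∫ ω, G ω ∂μ⟫ := by
  have hFm : AEMeasurable F μ := hF.aemeasurable
  have hGm : AEMeasurable G μ := hG.aemeasurable
  have hmap := (indepFun_iff_map_prod_eq_prod_map_map hFm hGm).mp h
  have hc : Continuous fun p : Y × Y => ⟪p.1, p.2⟫ := continuous_inner
  have hIF : Integrable (fun a : Y => a) (μ.map F) :=
    (integrable_map_measure stronglyMeasurable_id.aestronglyMeasurable hFm).mpr hF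
  have hIG : Integrable (fun a : Y => a) (μ.map G) :=
    (integrable_map_measure stronglyMeasurable_id.aestronglyMeasurable hGm).mpr hG
  have hprod : Integrable (fun p : Y × Y => ⟪p.1, p.2⟫) ((μ.map F).prod (μ.map G)) := by
    have hbound : Integrable (fun p : Y × Y => ‖p.1‖ * ‖p.2‖) ((μ.map F).prod (μ.map G)) :=
      hIF.norm.mul_prod hIG.norm
    refine hbound.mono' hc.aestronglyMeasurable (ae_of_all _ fun p => ?_)
    simpa using abs_real_inner_le_norm p.1 p.2
  calc ∫ ω, ⟪F ω, G ω⟫ ∂μ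
      = ∫ p, ⟪p.1, p.2⟫ ∂(μ.map fun ω => (F ω, G ω)) := by
        rw [integral_map (hFm.prodMk hGm) (by rw [hmap]; exact hc.aestronglyMeasurable)]
    _ = ∫ p, ⟪p.1, p.2⟫ ∂((μ.map F).prod (μ.map G)) := by rw [hmap]
    _ = ∫ a, ∫ b, ⟪a, b⟫ ∂(μ.map G) ∂(μ.map F) := integral_prod _ hprod
    _ = ∫ a, ⟪a, ∫ b, (fun c : Y => c) b ∂(μ.map G)⟫ ∂(μ.map F) := by
        refine integral_congr_ae (ae_of_all _ fun a => ?_)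
        exact integral_inner hIG a
    _ = ⟪∫ a, (fun c : Y => c) a ∂(μ.map F), ∫ b, (fun c : Y => c) b ∂(μ.map G)⟫ := by
        set c := ∫ b, (fun c : Y => c) b ∂(μ.map G) with hc'
        calc ∫ a, ⟪a, c⟫ ∂(μ.map F) = ∫ a, ⟪c, a⟫ ∂(μ.map F) := by
              refine integral_congr_ae (ae_of_all _ fun a => ?_)
              exact real_inner_comm _ _
          _ = ⟪c, ∫ a, (fun c : Y => c) a ∂(μ.map F)⟫ := integral_inner hIF c
          _ = _ := real_inner_comm _ _
    _ = ⟪∫ ω, F ω ∂μ, ∫ ω, G ω ∂μ⟫ := by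
        rw [integral_map (f := fun c : Y => c) hFm stronglyMeasurable_id.aestronglyMeasurable,
            integral_map (f := fun c : Y => c) hGm stronglyMeasurable_id.aestronglyMeasurable]

private theorem smfb_core
    {Y : Type*} [NormedAddCommGroup Y] [InnerProductSpace ℝ Y] [CompleteSpace Y]
    [MeasurableSpace Y] [BorelSpace Y] [SecondCountableTopology Y]
    {Ω : Type*} [MeasurableSpace Ω] (μ : Measure Ω) [IsProbabilityMeasure μ]
    (ys : ℕ → Ω → Y) (y : Y) (σ2 σ4 : ℝ)
    (hmeas : ∀ i, Measurable (ys i))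
    (hindep : iIndepFun ys μ)
    (hident : ∀ i, IdentDistrib (ys i) (ys 0) μ μ)
    (hint1 : Integrable (ys 0) μ)
    (hmean : ∫ ω, ys 0 ω ∂μ = y)
    (hint4 : Integrable (fun ω => ‖ys 0 ω - y‖ ^ 4) μ)
    (hσ2 : σ2 = ∫ ω, ‖ys 0 ω - y‖ ^ 2 ∂μ)
    (hσ4 : σ4 = ∫ ω, ‖ys 0 ω - y‖ ^ 4 ∂μ) :
    ∀ n : ℕ, 1 ≤ n →
      ∫ ω, ‖(n : ℝ)⁻¹ • (∑ i ∈ Finset.range n, ys i ω) - y‖ ^ 4 ∂μ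
        ≤ σ4 / (n : ℝ) ^ 3 + (3 * ((n : ℝ) - 1) / (n : ℝ) ^ 3) * σ2 ^ 2 := by
  classical
  set x : ℕ → Ω → Y := fun i ω => ys i ω - y with hxdef
  have hxmeas : ∀ i, Measurable (x i) := fun i => (hmeas i).sub measurable_const
  have hxindep : iIndepFun x μ :=
    hindep.comp (fun _ v => v - y) fun _ => measurable_id.sub measurable_const
  have hxident : ∀ i, IdentDistrib (x i) (x 0) μ μ := fun i =>
    (hident i).comp (measurable_id.sub measurable_const)
  have hx0int : Integrable (x 0) μ := hint1.sub (integrable_const y)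
  have hx0mean : ∫ ω, x 0 ω ∂μ = 0 := by
    simp [hxdef, integral_sub hint1 (integrable_const y), hmean]
  have hxint : ∀ i, Integrable (x i) μ := fun i => (hxident i).integrable_iff.mpr hx0int
  have hxmean : ∀ i, ∫ ω, x i ω ∂μ = 0 := fun i => ((hxident i).integral_eq).trans hx0mean
  have hx0pow4 : Integrable (fun ω => ‖x 0 ω‖ ^ 4) μ := by
    simpa [hxdef] using hint4
  have hx0pow : ∀ k, k ≤ 4 → Integrable (fun ω => ‖x 0 ω‖ ^ k) μ := by
    intro k hk
    refine ((integrable_const (1 : ℝ)).add hx0pow4).mono'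
      (((hxmeas 0).norm.pow_const k).aestronglyMeasurable) (ae_of_all _ fun ω => ?_)
    have h1 := smfb_pow_le_one_add ‖x 0 ω‖ (norm_nonneg _) hk
    simpa [abs_of_nonneg (pow_nonneg (norm_nonneg _) k)] using h1
  have hxpowident : ∀ i (k : ℕ), IdentDistrib (fun ω => ‖x i ω‖ ^ k) (fun ω => ‖x 0 ω‖ ^ k) μ μ :=
    fun i k => (hxident i).comp (measurable_norm.pow_const k)
  have hxpowint : ∀ i, ∀ k ≤ 4, Integrable (fun ω => ‖x i ω‖ ^ k) μ :=
    fun i k hk => (hxpowident i k).integrable_iff.mpr (hx0pow k hk)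
  have hxpoweq : ∀ i (k : ℕ), ∫ ω, ‖x i ω‖ ^ k ∂μ = ∫ ω, ‖x 0 ω‖ ^ k ∂μ :=
    fun i k => (hxpowident i k).integral_eq
  have hσ2x : σ2 = ∫ ω, ‖x 0 ω‖ ^ 2 ∂μ := by simpa [hxdef] using hσ2
  have hσ4x : σ4 = ∫ ω, ‖x 0 ω‖ ^ 4 ∂μ := by simpa [hxdef] using hσ4
  set S : ℕ → Ω → Y := fun n ω => ∑ i ∈ Finset.range n, x i ω with hSdef
  have hSsum : ∀ n, S n = ∑ i ∈ Finset.range n, x i := fun n =>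
    funext fun ω => by simp [hSdef]
  have hSmeas : ∀ n, Measurable (S n) := fun n =>
    Finset.measurable_sum _ fun i _ => hxmeas i
  have hSint : ∀ n, Integrable (S n) μ := fun n =>
    integrable_finset_sum _ fun i _ => hxint i
  have hSmean : ∀ n, ∫ ω, S n ω ∂μ = 0 := by
    intro n
    rw [show (fun ω => S n ω) = fun ω => ∑ i ∈ Finset.range n, x i ω from rfl,
      integral_finset_sum _ fun i _ => hxint i]
    simp [hxmean]
  have hindepSx : ∀ n, IndepFun (S n) (x n) μ := by
    intro n
    rw [hSsum n]
    exact hxindep.indepFun_sum_range_succ hxmeas n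
  have key : ∀ n : ℕ, Integrable (fun ω => ‖S n ω‖ ^ 2) μ ∧ Integrable (fun ω => ‖S n ω‖ ^ 4) μ ∧
      ∫ ω, ‖S n ω‖ ^ 2 ∂μ = n * σ2 ∧
      ∫ ω, ‖S n ω‖ ^ 4 ∂μ ≤ n * σ4 + 3 * n * (n - 1) * σ2 ^ 2 := by
    intro n
    induction n with
    | zero =>
        have h0 : ∀ ω, S 0 ω = 0 := fun ω => by simp [hSdef]
        refine ⟨?_, ?_, ?_, ?_⟩
        · simpa [h0] using (integrable_const (0 : ℝ)).congr (ae_of_all _ fun ω => by simp [h0])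
        · simpa [h0] using (integrable_const (0 : ℝ)).congr (ae_of_all _ fun ω => by simp [h0])
        · simp [h0]
        · simp [h0]
    | succ n ih =>
        obtain ⟨ih2, ih4, ihe, ihle⟩ := ih
        have hgmeas : Measurable (x n) := hxmeas n
        have hFmeas : Measurable (S n) := hSmeas n
        have hFg : IndepFun (S n) (x n) μ := hindepSx n
        have hFstep : ∀ ω, S (n + 1) ω = S n ω + x n ω := fun ω => by
          simp only [hSdef]
          exact Finset.sum_range_succ _ n
        -- abbreviations
        have hBmeas : Measurable fun ω => ⟪S n ω, x n ω⟫ := hFmeas.inner hgmeas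
        have hsq : ∀ ω, ‖S (n + 1) ω‖ ^ 2
            = ‖S n ω‖ ^ 2 + 2 * ⟪S n ω, x n ω⟫ + ‖x n ω‖ ^ 2 := fun ω => by
          rw [hFstep ω]; exact norm_add_sq_real _ _
        have hq : ∀ ω, ‖S (n + 1) ω‖ ^ 4
            = ‖S n ω‖ ^ 2 * ‖S n ω‖ ^ 2 + 4 * (⟪S n ω, x n ω⟫ * ⟪S n ω, x n ω⟫)
              + ‖x n ω‖ ^ 2 * ‖x n ω‖ ^ 2
              + 4 * (‖S n ω‖ ^ 2 * ⟪S n ω, x n ω⟫)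
              + 2 * (‖S n ω‖ ^ 2 * ‖x n ω‖ ^ 2)
              + 4 * (⟪S n ω, x n ω⟫ * ‖x n ω‖ ^ 2) := fun ω => by
          have h2 := hsq ω
          have h4 : ‖S (n + 1) ω‖ ^ 4 = (‖S (n + 1) ω‖ ^ 2) ^ 2 := by ring
          rw [h4, h2]; ring
        -- integrable pieces
        have hg4int : Integrable (fun ω => ‖x n ω‖ ^ 4) μ := hxpowint n 4 le_rfl
        have hg2int : Integrable (fun ω => ‖x n ω‖ ^ 2) μ := hxpowint n 2 (by norm_num)
        have hPint : Integrable (fun ω => ‖S n ω‖ ^ 4 + ‖x n ω‖ ^ 4) μ := ih4.add hg4int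
        have habsB : ∀ ω, |⟪S n ω, x n ω⟫| ≤ ‖S n ω‖ * ‖x n ω‖ := fun ω =>
          abs_real_inner_le_norm _ _
        have hdom : ∀ (a b : ℕ), a + b = 4 → ∀ ω,
            ‖S n ω‖ ^ a * ‖x n ω‖ ^ b ≤ ‖S n ω‖ ^ 4 + ‖x n ω‖ ^ 4 := by
          intro a b hab ω
          have := smfb_pow_mul_pow_le ‖S n ω‖ ‖x n ω‖ (norm_nonneg _) (norm_nonneg _) a b
          rwa [hab] at this
        have hB2int : Integrable (fun ω => ⟪S n ω, x n ω⟫ * ⟪S n ω, x n ω⟫) μ := by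
          refine hPint.mono' ((hBmeas.mul hBmeas).aestronglyMeasurable)
            (ae_of_all _ fun ω => ?_)
          have h1 : |⟪S n ω, x n ω⟫ * ⟪S n ω, x n ω⟫| ≤ (‖S n ω‖ * ‖x n ω‖) * (‖S n ω‖ * ‖x n ω‖) := by
            rw [abs_mul]
            exact mul_le_mul (habsB ω) (habsB ω) (abs_nonneg _) (by positivity)
          refine h1.trans ?_
          have h2 := hdom 2 2 rfl ω
          calc ‖S n ω‖ * ‖x n ω‖ * (‖S n ω‖ * ‖x n ω‖) = ‖S n ω‖ ^ 2 * ‖x n ω‖ ^ 2 := by ring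
            _ ≤ _ := h2
        have hABint : Integrable (fun ω => ‖S n ω‖ ^ 2 * ⟪S n ω, x n ω⟫) μ := by
          refine hPint.mono' (((hFmeas.norm.pow_const 2).mul hBmeas).aestronglyMeasurable)
            (ae_of_all _ fun ω => ?_)
          have h1 : |‖S n ω‖ ^ 2 * ⟪S n ω, x n ω⟫| ≤ ‖S n ω‖ ^ 2 * (‖S n ω‖ * ‖x n ω‖) := by
            rw [abs_mul, abs_of_nonneg (by positivity : (0:ℝ) ≤ ‖S n ω‖ ^ 2)]
            exact mul_le_mul_of_nonneg_left (habsB ω) (by positivity)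
          refine h1.trans ?_
          have h2 := hdom 3 1 rfl ω
          calc ‖S n ω‖ ^ 2 * (‖S n ω‖ * ‖x n ω‖) = ‖S n ω‖ ^ 3 * ‖x n ω‖ ^ 1 := by ring
            _ ≤ _ := h2
        have hBCint : Integrable (fun ω => ⟪S n ω, x n ω⟫ * ‖x n ω‖ ^ 2) μ := by
          refine hPint.mono' ((hBmeas.mul (hgmeas.norm.pow_const 2)).aestronglyMeasurable)
            (ae_of_all _ fun ω => ?_)
          have h1 : |⟪S n ω, x n ω⟫ * ‖x n ω‖ ^ 2| ≤ (‖S n ω‖ * ‖x n ω‖) * ‖x n ω‖ ^ 2 := by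
            rw [abs_mul, abs_of_nonneg (by positivity : (0:ℝ) ≤ ‖x n ω‖ ^ 2)]
            exact mul_le_mul_of_nonneg_right (habsB ω) (by positivity)
          refine h1.trans ?_
          have h2 := hdom 1 3 rfl ω
          calc ‖S n ω‖ * ‖x n ω‖ * ‖x n ω‖ ^ 2 = ‖S n ω‖ ^ 1 * ‖x n ω‖ ^ 3 := by ring
            _ ≤ _ := h2
        have hACint : Integrable (fun ω => ‖S n ω‖ ^ 2 * ‖x n ω‖ ^ 2) μ := by
          refine hPint.mono' (((hFmeas.norm.pow_const 2).mul (hgmeas.norm.pow_const 2)).aestronglyMeasurable)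
            (ae_of_all _ fun ω => ?_)
          have h2 := hdom 2 2 rfl ω
          calc |‖S n ω‖ ^ 2 * ‖x n ω‖ ^ 2| = ‖S n ω‖ ^ 2 * ‖x n ω‖ ^ 2 :=
                abs_of_nonneg (by positivity)
            _ ≤ _ := h2
        have hA2int : Integrable (fun ω => ‖S n ω‖ ^ 2 * ‖S n ω‖ ^ 2) μ := by
          refine ih4.congr (ae_of_all _ fun ω => ?_)
          ring
        have hC2int : Integrable (fun ω => ‖x n ω‖ ^ 2 * ‖x n ω‖ ^ 2) μ := by
          refine hg4int.congr (ae_of_all _ fun ω => ?_)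
          ring
        have hBint : Integrable (fun ω => ⟪S n ω, x n ω⟫) μ := by
          refine (ih2.add hg2int).mono' (hBmeas.aestronglyMeasurable)
            (ae_of_all _ fun ω => ?_)
          have h1 := habsB ω
          have h2 := smfb_pow_mul_pow_le ‖S n ω‖ ‖x n ω‖ (norm_nonneg _) (norm_nonneg _) 1 1
          simp only [pow_one] at h2
          simpa using h1.trans h2
        -- integral values
        have hEB : ∫ ω, ⟪S n ω, x n ω⟫ ∂μ = 0 := by
          rw [smfb_integral_inner hFg (hSint n) (hxint n), hSmean n, inner_zero_left]
        have hφc : Continuous fun v : Y => (‖v‖ ^ 2) • v :=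
          ((continuous_norm.pow 2).smul continuous_id)
        have hF'int : Integrable (fun ω => (‖S n ω‖ ^ 2) • S n ω) μ := by
          refine ((integrable_const (1 : ℝ)).add ih4).mono'
            ((hφc.measurable.comp hFmeas).aestronglyMeasurable) (ae_of_all _ fun ω => ?_)
          have h1 : ‖S n ω‖ ^ 3 ≤ 1 + ‖S n ω‖ ^ 4 :=
            smfb_pow_le_one_add _ (norm_nonneg _) (by norm_num)
          calc ‖(‖S n ω‖ ^ 2) • S n ω‖ = ‖S n ω‖ ^ 3 := by
                rw [norm_smul, Real.norm_eq_abs, abs_of_nonneg (by positivity)]; ring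
            _ ≤ 1 + ‖S n ω‖ ^ 4 := h1
        have hg'int : Integrable (fun ω => (‖x n ω‖ ^ 2) • x n ω) μ := by
          refine ((integrable_const (1 : ℝ)).add hg4int).mono'
            ((hφc.measurable.comp hgmeas).aestronglyMeasurable) (ae_of_all _ fun ω => ?_)
          have h1 : ‖x n ω‖ ^ 3 ≤ 1 + ‖x n ω‖ ^ 4 :=
            smfb_pow_le_one_add _ (norm_nonneg _) (by norm_num)
          calc ‖(‖x n ω‖ ^ 2) • x n ω‖ = ‖x n ω‖ ^ 3 := by
                rw [norm_smul, Real.norm_eq_abs, abs_of_nonneg (by positivity)]; ring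
            _ ≤ 1 + ‖x n ω‖ ^ 4 := h1
        have hEAB : ∫ ω, ‖S n ω‖ ^ 2 * ⟪S n ω, x n ω⟫ ∂μ = 0 := by
          have hFg' : IndepFun (fun ω => (‖S n ω‖ ^ 2) • S n ω) (x n) μ :=
            hFg.comp hφc.measurable measurable_id
          have h1 := smfb_integral_inner hFg' hF'int (hxint n)
          rw [hxmean n, inner_zero_right] at h1
          calc ∫ ω, ‖S n ω‖ ^ 2 * ⟪S n ω, x n ω⟫ ∂μ
              = ∫ ω, ⟪(‖S n ω‖ ^ 2) • S n ω, x n ω⟫ ∂μ := by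
                refine integral_congr_ae (ae_of_all _ fun ω => ?_)
                simp only [real_inner_smul_left]
            _ = 0 := h1
        have hEBC : ∫ ω, ⟪S n ω, x n ω⟫ * ‖x n ω‖ ^ 2 ∂μ = 0 := by
          have hFg'' : IndepFun (S n) (fun ω => (‖x n ω‖ ^ 2) • x n ω) μ :=
            hFg.comp measurable_id hφc.measurable
          have h1 := smfb_integral_inner hFg'' (hSint n) hg'int
          rw [hSmean n, inner_zero_left] at h1
          calc ∫ ω, ⟪S n ω, x n ω⟫ * ‖x n ω‖ ^ 2 ∂μ
              = ∫ ω, ⟪S n ω, (‖x n ω‖ ^ 2) • x n ω⟫ ∂μ := by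
                refine integral_congr_ae (ae_of_all _ fun ω => ?_)
                simp only [real_inner_smul_right]
                ring
            _ = 0 := h1
        have hEC : ∫ ω, ‖x n ω‖ ^ 2 ∂μ = σ2 := by rw [hxpoweq n 2, ← hσ2x]
        have hEC4 : ∫ ω, ‖x n ω‖ ^ 4 ∂μ = σ4 := by rw [hxpoweq n 4, ← hσ4x]
        have hEAC : ∫ ω, ‖S n ω‖ ^ 2 * ‖x n ω‖ ^ 2 ∂μ = (n * σ2) * σ2 := by
          have hACindep : IndepFun (fun ω => ‖S n ω‖ ^ 2) (fun ω => ‖x n ω‖ ^ 2) μ :=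
            hFg.comp (measurable_norm.pow_const 2) (measurable_norm.pow_const 2)
          have h1 := IndepFun.integral_mul_eq_mul_integral hACindep ih2.aestronglyMeasurable hg2int.aestronglyMeasurable
          have h2 : ((fun ω => ‖S n ω‖ ^ 2) * fun ω => ‖x n ω‖ ^ 2) = fun ω => ‖S n ω‖ ^ 2 * ‖x n ω‖ ^ 2 := rfl
          rw [h2] at h1
          rw [h1, ihe, hEC]
        have hEB2 : ∫ ω, ⟪S n ω, x n ω⟫ * ⟪S n ω, x n ω⟫ ∂μ ≤ (n * σ2) * σ2 := by
          rw [← hEAC]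
          refine integral_mono_of_nonneg (ae_of_all _ fun ω => mul_self_nonneg _) hACint
            (ae_of_all _ fun ω => ?_)
          have h1 := habsB ω
          calc ⟪S n ω, x n ω⟫ * ⟪S n ω, x n ω⟫ = |⟪S n ω, x n ω⟫| * |⟪S n ω, x n ω⟫| := by
                rw [← abs_mul, abs_mul_self]
            _ ≤ (‖S n ω‖ * ‖x n ω‖) * (‖S n ω‖ * ‖x n ω‖) :=
                mul_le_mul h1 h1 (abs_nonneg _) (by positivity)
            _ = ‖S n ω‖ ^ 2 * ‖x n ω‖ ^ 2 := by ring
        have hEA2 : ∫ ω, ‖S n ω‖ ^ 2 * ‖S n ω‖ ^ 2 ∂μ ≤ n * σ4 + 3 * n * (n - 1) * σ2 ^ 2 := by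
          refine le_trans (le_of_eq ?_) ihle
          refine integral_congr_ae (ae_of_all _ fun ω => ?_)
          ring
        have hEC2 : ∫ ω, ‖x n ω‖ ^ 2 * ‖x n ω‖ ^ 2 ∂μ = σ4 := by
          rw [show (fun ω => ‖x n ω‖ ^ 2 * ‖x n ω‖ ^ 2) = fun ω => ‖x n ω‖ ^ 4 from
            funext fun ω => by ring]
          exact hEC4
        -- sum decomposition
        have i1 := hA2int
        have i2 := hB2int.const_mul (4 : ℝ)
        have i3 := hC2int
        have i4 := hABint.const_mul (4 : ℝ)
        have i5 := hACint.const_mul (2 : ℝ)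
        have i6 := hBCint.const_mul (4 : ℝ)
        have hint_new4 : Integrable (fun ω => ‖S (n + 1) ω‖ ^ 4) μ := by
          refine (((((i1.add i2).add i3).add i4).add i5).add i6).congr
            (ae_of_all _ fun ω => ?_)
          simp only [Pi.add_apply]
          rw [hq ω]
        have hint_new2 : Integrable (fun ω => ‖S (n + 1) ω‖ ^ 2) μ := by
          refine ((ih2.add (hBint.const_mul (2 : ℝ))).add hg2int).congr
            (ae_of_all _ fun ω => ?_)
          simp only [Pi.add_apply]
          rw [hsq ω]
        have heq2 : ∫ ω, ‖S (n + 1) ω‖ ^ 2 ∂μ = (n + 1 : ℕ) * σ2 := by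
          calc ∫ ω, ‖S (n + 1) ω‖ ^ 2 ∂μ
              = ∫ ω, (‖S n ω‖ ^ 2 + 2 * ⟪S n ω, x n ω⟫ + ‖x n ω‖ ^ 2) ∂μ :=
                integral_congr_ae (ae_of_all _ hsq)
            _ = (∫ ω, ‖S n ω‖ ^ 2 ∂μ) + (∫ ω, 2 * ⟪S n ω, x n ω⟫ ∂μ) + ∫ ω, ‖x n ω‖ ^ 2 ∂μ := by
                have k1 : Integrable (fun ω => ‖S n ω‖ ^ 2 + 2 * ⟪S n ω, x n ω⟫) μ :=
                  ih2.add (hBint.const_mul (2 : ℝ))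
                rw [integral_add k1 hg2int, integral_add ih2 (hBint.const_mul (2 : ℝ))]
            _ = n * σ2 + 2 * 0 + σ2 := by
                rw [ihe, hEC, integral_const_mul, hEB]
            _ = (n + 1 : ℕ) * σ2 := by push_cast; ring
        have hle4 : ∫ ω, ‖S (n + 1) ω‖ ^ 4 ∂μ
            ≤ (n + 1 : ℕ) * σ4 + 3 * (n + 1 : ℕ) * ((n + 1 : ℕ) - 1) * σ2 ^ 2 := by
          have hdecomp : ∫ ω, ‖S (n + 1) ω‖ ^ 4 ∂μ
              = (∫ ω, ‖S n ω‖ ^ 2 * ‖S n ω‖ ^ 2 ∂μ)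
                + 4 * (∫ ω, ⟪S n ω, x n ω⟫ * ⟪S n ω, x n ω⟫ ∂μ)
                + (∫ ω, ‖x n ω‖ ^ 2 * ‖x n ω‖ ^ 2 ∂μ)
                + 4 * (∫ ω, ‖S n ω‖ ^ 2 * ⟪S n ω, x n ω⟫ ∂μ)
                + 2 * (∫ ω, ‖S n ω‖ ^ 2 * ‖x n ω‖ ^ 2 ∂μ)
                + 4 * (∫ ω, ⟪S n ω, x n ω⟫ * ‖x n ω‖ ^ 2 ∂μ) := by
            calc ∫ ω, ‖S (n + 1) ω‖ ^ 4 ∂μ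
                = ∫ ω, (‖S n ω‖ ^ 2 * ‖S n ω‖ ^ 2 + 4 * (⟪S n ω, x n ω⟫ * ⟪S n ω, x n ω⟫)
                    + ‖x n ω‖ ^ 2 * ‖x n ω‖ ^ 2 + 4 * (‖S n ω‖ ^ 2 * ⟪S n ω, x n ω⟫)
                    + 2 * (‖S n ω‖ ^ 2 * ‖x n ω‖ ^ 2)
                    + 4 * (⟪S n ω, x n ω⟫ * ‖x n ω‖ ^ 2)) ∂μ :=
                  integral_congr_ae (ae_of_all _ hq)
              _ = _ := by
                  have j12 : Integrable (fun ω => ‖S n ω‖ ^ 2 * ‖S n ω‖ ^ 2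
                      + 4 * (⟪S n ω, x n ω⟫ * ⟪S n ω, x n ω⟫)) μ := i1.add i2
                  have j13 : Integrable (fun ω => ‖S n ω‖ ^ 2 * ‖S n ω‖ ^ 2
                      + 4 * (⟪S n ω, x n ω⟫ * ⟪S n ω, x n ω⟫)
                      + ‖x n ω‖ ^ 2 * ‖x n ω‖ ^ 2) μ := j12.add i3
                  have j14 : Integrable (fun ω => ‖S n ω‖ ^ 2 * ‖S n ω‖ ^ 2
                      + 4 * (⟪S n ω, x n ω⟫ * ⟪S n ω, x n ω⟫)
                      + ‖x n ω‖ ^ 2 * ‖x n ω‖ ^ 2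
                      + 4 * (‖S n ω‖ ^ 2 * ⟪S n ω, x n ω⟫)) μ := j13.add i4
                  have j15 : Integrable (fun ω => ‖S n ω‖ ^ 2 * ‖S n ω‖ ^ 2
                      + 4 * (⟪S n ω, x n ω⟫ * ⟪S n ω, x n ω⟫)
                      + ‖x n ω‖ ^ 2 * ‖x n ω‖ ^ 2
                      + 4 * (‖S n ω‖ ^ 2 * ⟪S n ω, x n ω⟫)
                      + 2 * (‖S n ω‖ ^ 2 * ‖x n ω‖ ^ 2)) μ := j14.add i5
                  rw [integral_add j15 i6, integral_add j14 i5, integral_add j13 i4,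
                    integral_add j12 i3, integral_add i1 i2,
                    integral_const_mul, integral_const_mul, integral_const_mul,
                    integral_const_mul]
          rw [hdecomp, hEAB, hEBC, hEAC, hEC2]
          push_cast
          nlinarith [hEA2, hEB2]
        exact ⟨hint_new2, hint_new4, heq2, hle4⟩
  intro n hn
  have hn0 : (n : ℝ) ≠ 0 := Nat.cast_ne_zero.mpr (by omega)
  obtain ⟨-, h4int, -, h4le⟩ := key n
  have hpt : ∀ ω, ‖(n : ℝ)⁻¹ • (∑ i ∈ Finset.range n, ys i ω) - y‖ ^ 4
      = ((n : ℝ)⁻¹) ^ 4 * ‖S n ω‖ ^ 4 := by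
    intro ω
    have hS : S n ω = (∑ i ∈ Finset.range n, ys i ω) - (n : ℝ) • y := by
      simp only [hSdef, hxdef, Finset.sum_sub_distrib, Finset.sum_const, Finset.card_range]
      rw [Nat.cast_smul_eq_nsmul ℝ]
    have h1 : (n : ℝ)⁻¹ • (∑ i ∈ Finset.range n, ys i ω) - y = (n : ℝ)⁻¹ • S n ω := by
      rw [hS, smul_sub, smul_smul, inv_mul_cancel₀ hn0, one_smul]
    rw [h1, norm_smul, Real.norm_eq_abs, abs_of_nonneg (inv_nonneg.mpr (Nat.cast_nonneg n))]
    ring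
  calc ∫ ω, ‖(n : ℝ)⁻¹ • (∑ i ∈ Finset.range n, ys i ω) - y‖ ^ 4 ∂μ
      = ∫ ω, ((n : ℝ)⁻¹) ^ 4 * ‖S n ω‖ ^ 4 ∂μ := integral_congr_ae (ae_of_all _ hpt)
    _ = ((n : ℝ)⁻¹) ^ 4 * ∫ ω, ‖S n ω‖ ^ 4 ∂μ := integral_const_mul _ _
    _ ≤ ((n : ℝ)⁻¹) ^ 4 * (n * σ4 + 3 * n * (n - 1) * σ2 ^ 2) :=
        mul_le_mul_of_nonneg_left h4le (by positivity)
    _ = σ4 / (n : ℝ) ^ 3 + (3 * ((n : ℝ) - 1) / (n : ℝ) ^ 3) * σ2 ^ 2 := by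
        field_simp

/-- Fourth-moment bound for the sample mean of i.i.d. `Y`-valued random variables:
`E[‖ȳ⁽ⁿ⁾ - y‖⁴] ≤ σ₄/n³ + (3(n-1)/n³) σ⁴` where `σ² = E[‖y₁ - y‖²]` and
`σ₄ = E[‖y₁ - y‖⁴]`. -/
theorem sample_mean_fourth_moment_bound
    {Y : Type*} [NormedAddCommGroup Y] [InnerProductSpace ℝ Y] [CompleteSpace Y]
    [MeasurableSpace Y] [BorelSpace Y]
    {Ω : Type*} [MeasurableSpace Ω] (μ : Measure Ω) [IsProbabilityMeasure μ]
    (ys : ℕ → Ω → Y) (y : Y) (σ2 σ4 : ℝ)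
    (hmeas : ∀ i, Measurable (ys i))
    (hindep : iIndepFun ys μ)
    (hident : ∀ i, IdentDistrib (ys i) (ys 0) μ μ)
    (hint1 : Integrable (ys 0) μ)
    (hmean : ∫ ω, ys 0 ω ∂μ = y)
    (hint2 : Integrable (fun ω => ‖ys 0 ω - y‖ ^ 2) μ)
    (hσ2 : σ2 = ∫ ω, ‖ys 0 ω - y‖ ^ 2 ∂μ)
    (hint4 : Integrable (fun ω => ‖ys 0 ω - y‖ ^ 4) μ)
    (hσ4 : σ4 = ∫ ω, ‖ys 0 ω - y‖ ^ 4 ∂μ) :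
    ∀ n : ℕ, 1 ≤ n →
      ∫ ω, ‖(n : ℝ)⁻¹ • (∑ i ∈ Finset.range n, ys i ω) - y‖ ^ 4 ∂μ
        ≤ σ4 / (n : ℝ) ^ 3 + (3 * ((n : ℝ) - 1) / (n : ℝ) ^ 3) * σ2 ^ 2 := by
  classical
  obtain ⟨t, htsep, htmem⟩ := hint1.aestronglyMeasurable.isSeparable_ae_range
  set Y₀ : Submodule ℝ Y := (Submodule.span ℝ (insert y (closure t))).topologicalClosure
    with hY₀def
  haveI : CompleteSpace Y₀ := (Submodule.isClosed_topologicalClosure _).completeSpace_coe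
  have hsep : TopologicalSpace.IsSeparable (Y₀ : Set Y) := by
    have h1 : TopologicalSpace.IsSeparable (insert y (closure t)) := by
      rw [Set.insert_eq]
      exact (Set.finite_singleton y).isSeparable.union htsep.closure
    exact h1.span.closure
  haveI : TopologicalSpace.SeparableSpace Y₀ := hsep.separableSpace
  haveI : SecondCountableTopology Y₀ := UniformSpace.secondCountable_of_separable _
  haveI : BorelSpace Y₀ := Subtype.borelSpace _
  have hY₀closed : IsClosed (Y₀ : Set Y) := Submodule.isClosed_topologicalClosure _
  have hY₀meas : MeasurableSet (Y₀ : Set Y) := hY₀closed.measurableSet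
  have hy₀ : y ∈ Y₀ :=
    Submodule.le_topologicalClosure _ (Submodule.subset_span (Set.mem_insert _ _))
  have htY₀ : t ⊆ (Y₀ : Set Y) := fun v hv =>
    Submodule.le_topologicalClosure _
      (Submodule.subset_span (Set.mem_insert_of_mem _ (subset_closure hv)))
  have hmem0 : ∀ᵐ ω ∂μ, ys 0 ω ∈ Y₀ := htmem.mono fun ω h => htY₀ h
  have hmem : ∀ i, ∀ᵐ ω ∂μ, ys i ω ∈ Y₀ := by
    intro i
    have h0 : μ (ys 0 ⁻¹' (Y₀ : Set Y)ᶜ) = 0 := by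
      have := hmem0
      rw [ae_iff] at this
      exact this
    have hi : μ (ys i ⁻¹' (Y₀ : Set Y)ᶜ) = 0 := by
      have hmap := (hident i).map_eq
      calc μ (ys i ⁻¹' (Y₀ : Set Y)ᶜ)
          = (μ.map (ys i)) (Y₀ : Set Y)ᶜ := (Measure.map_apply (hmeas i) hY₀meas.compl).symm
        _ = (μ.map (ys 0)) (Y₀ : Set Y)ᶜ := by rw [hmap]
        _ = μ (ys 0 ⁻¹' (Y₀ : Set Y)ᶜ) := Measure.map_apply (hmeas 0) hY₀meas.compl
        _ = 0 := h0
    rw [ae_iff]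
    exact hi
  set r : Y → Y₀ := fun v => if h : v ∈ Y₀ then (⟨v, h⟩ : Y₀) else 0 with hrdef
  have hrmeas : Measurable r := by
    have := Measurable.dite (s := (Y₀ : Set Y))
      (f := fun (x : (Y₀ : Set Y)) => (⟨x.1, x.2⟩ : Y₀)) (g := fun _ => (0 : Y₀))
      ((measurable_subtype_coe).subtype_mk) measurable_const hY₀meas
    convert this using 2 with v
    rfl
  have hrspec : ∀ v (h : v ∈ Y₀), ((r v : Y₀) : Y) = v := fun v h => by
    simp [hrdef, dif_pos h]
  set zs : ℕ → Ω → Y₀ := fun i ω => r (ys i ω) with hzsdef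
  have hzmeas : ∀ i, Measurable (zs i) := fun i => hrmeas.comp (hmeas i)
  have hzcoe : ∀ i, (fun ω => (zs i ω : Y)) =ᵐ[μ] ys i := fun i =>
    (hmem i).mono fun ω h => hrspec _ h
  set y₀ : Y₀ := ⟨y, hy₀⟩ with hy₀def2
  have hzindep : iIndepFun zs μ :=
    hindep.comp (fun _ => r) fun _ => hrmeas
  have hzident : ∀ i, IdentDistrib (zs i) (zs 0) μ μ := fun i => (hident i).comp hrmeas
  have hzint1 : Integrable (zs 0) μ := by
    refine ⟨(hzmeas 0).aestronglyMeasurable, ?_⟩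
    refine hint1.2.congr' ?_
    filter_upwards [hzcoe 0] with ω h
    rw [← h]
    rfl
  have hzmean : ∫ ω, zs 0 ω ∂μ = y₀ := by
    apply Subtype.ext
    have hL := (Y₀.subtypeL).integral_comp_comm hzint1
    have h1 : ((∫ ω, zs 0 ω ∂μ : Y₀) : Y) = ∫ ω, (zs 0 ω : Y) ∂μ :=
      calc ((∫ ω, zs 0 ω ∂μ : Y₀) : Y) = Y₀.subtypeL (∫ ω, zs 0 ω ∂μ) := rfl
        _ = ∫ ω, Y₀.subtypeL (zs 0 ω) ∂μ := hL.symm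
        _ = ∫ ω, (zs 0 ω : Y) ∂μ := rfl
    rw [h1, integral_congr_ae (hzcoe 0), hmean]
  have hzdiff : ∀ (k : ℕ), (fun ω => ‖ys 0 ω - y‖ ^ k) =ᵐ[μ] fun ω => ‖zs 0 ω - y₀‖ ^ k := by
    intro k
    filter_upwards [hzcoe 0] with ω h
    have : ‖zs 0 ω - y₀‖ = ‖ys 0 ω - y‖ := by
      rw [← h]
      rfl
    rw [this]
  have hzint4 : Integrable (fun ω => ‖zs 0 ω - y₀‖ ^ 4) μ := hint4.congr (hzdiff 4)
  have hσ2z : σ2 = ∫ ω, ‖zs 0 ω - y₀‖ ^ 2 ∂μ := hσ2.trans (integral_congr_ae (hzdiff 2))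
  have hσ4z : σ4 = ∫ ω, ‖zs 0 ω - y₀‖ ^ 4 ∂μ := hσ4.trans (integral_congr_ae (hzdiff 4))
  have main := smfb_core μ zs y₀ σ2 σ4 hzmeas hzindep hzident hzint1 hzmean hzint4 hσ2z hσ4z
  intro n hn
  have hae : ∀ᵐ ω ∂μ, ∀ i, ys i ω ∈ Y₀ := ae_all_iff.mpr hmem
  have haeeq : (fun ω => ‖(n : ℝ)⁻¹ • (∑ i ∈ Finset.range n, ys i ω) - y‖ ^ 4)
      =ᵐ[μ] fun ω => ‖(n : ℝ)⁻¹ • (∑ i ∈ Finset.range n, zs i ω) - y₀‖ ^ 4 := by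
    filter_upwards [hae] with ω h
    have hcoe : (((n : ℝ)⁻¹ • (∑ i ∈ Finset.range n, zs i ω) - y₀ : Y₀) : Y)
        = (n : ℝ)⁻¹ • (∑ i ∈ Finset.range n, ys i ω) - y := by
      push_cast
      congr 1
      congr 1
      exact Finset.sum_congr rfl fun i _ => hrspec _ (h i)
    have : ‖(n : ℝ)⁻¹ • (∑ i ∈ Finset.range n, zs i ω) - y₀‖
        = ‖(((n : ℝ)⁻¹ • (∑ i ∈ Finset.range n, zs i ω) - y₀ : Y₀) : Y)‖ := rfl
    rw [this, hcoe]
  rw [integral_congr_ae haeeq]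
  exact main n hn
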